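/- Let k ≥ 9 be an integer. If q ∈ (1,2) satisfies |q − q_k| ≤ q_k^{−2k−6}, then there exists a sequence (c_j) ∈ {−1,0,1}^ℕ with π_q((c_j)) = 1 such that (c_j) begins with k ones followed by k+4 zeros, and the tail (c_j)_{j≥2k+5} is an infinite concatenation of blocks from W_2 = {(−1,0), (0,−1), (0,0), (0,1), (1,0)}. -/

import Mathlib

open Set

/-- Projection map: the value of the (0-indexed) digit sequence `a` in base `q`,
`π_q(a) = Σ_{j=0}^∞ a_j q^{-(j+1)}`. -/
noncomputable def piQ (q : ℝ) (a : ℕ → ℝ) : ℝ := ∑' j : ℕ, a j / q ^ (j + 1)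

/-- `a` is a sequence of digits in `{0,1}`. -/
def IsDigitSeq (a : ℕ → ℝ) : Prop := ∀ j, a j = 0 ∨ a j = 1

/-- `a` is a sequence of digits in `{-1,0,1}`. -/
def IsExtDigitSeq (a : ℕ → ℝ) : Prop := ∀ j, a j = -1 ∨ a j = 0 ∨ a j = 1

/-- The set of base-`q` expansions of `x`. -/
def SigmaSet (q x : ℝ) : Set (ℕ → ℝ) := {a | IsDigitSeq a ∧ piQ q a = x}

/-- The interval `I_q = [0, 1/(q-1)]`. -/
def Iq (q : ℝ) : Set ℝ := Set.Icc 0 (1 / (q - 1))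

/-- The switch region `J_q = [1/q, 1/(q(q-1))]`. -/
def Jq (q : ℝ) : Set ℝ := Set.Icc (1 / q) (1 / (q * (q - 1)))

/-- The set of points of `I_q` having exactly `m` base-`q` expansions. -/
def UqM (q : ℝ) (m : ℕ∞) : Set ℝ := {x | x ∈ Iq q ∧ (SigmaSet q x).encard = m}

/-- The set of points of `I_q` having a unique base-`q` expansion. -/
def Uq (q : ℝ) : Set ℝ := UqM q 1

/-- `B_m`: the set of bases `q ∈ (1,2)` for which some point has exactly `m` expansions. -/
def Bset (m : ℕ∞) : Set ℝ := {q | q ∈ Set.Ioo (1 : ℝ) 2 ∧ (UqM q m).Nonempty}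

/-- `x` is the `k`-Bonacci number: the root in `(1,2)` of `x^k = x^{k-1} + ⋯ + x + 1`. -/
def IsBonacci (k : ℕ) (x : ℝ) : Prop :=
  x ∈ Set.Ioo (1 : ℝ) 2 ∧ x ^ k = ∑ i ∈ Finset.range k, x ^ i

/-- `a` contains no occurrence of the word `01^k` as a consecutive block. -/
def AvoidsWord01 (k : ℕ) (a : ℕ → ℝ) : Prop :=
  ∀ i, ¬(a i = 0 ∧ ∀ j, 1 ≤ j → j ≤ k → a (i + j) = 1)

/-- `a` contains no occurrence of the word `10^k` as a consecutive block. -/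
def AvoidsWord10 (k : ℕ) (a : ℕ → ℝ) : Prop :=
  ∀ i, ¬(a i = 1 ∧ ∀ j, 1 ≤ j → j ≤ k → a (i + j) = 0)

/-- `S_k`: the set of `{0,1}`-sequences avoiding the words `01^k` and `10^k`. -/
def Sset (k : ℕ) : Set (ℕ → ℝ) := {a | IsDigitSeq a ∧ AvoidsWord01 k a ∧ AvoidsWord10 k a}

/-- `g_{q,k} = f_1^{-(k-1)} ∘ f_0^{-1}`, where `f_0^{-1}(y) = y/q` and `f_1^{-1}(y) = (y+1)/q`. -/
noncomputable def gMap (q : ℝ) (k : ℕ) (x : ℝ) : ℝ := (fun y => (y + 1) / q)^[k - 1] (x / q)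

/-- The maps `f_0(x) = qx` (for `b = false`) and `f_1(x) = qx - 1` (for `b = true`). -/
noncomputable def fDigit (q : ℝ) (b : Bool) (x : ℝ) : ℝ := if b then q * x - 1 else q * x

/-- `(a, b)` is a bounded gap of `C`: a bounded connected component of `ℝ \ C`. -/
def IsGap (C : Set ℝ) (a b : ℝ) : Prop :=
  a < b ∧ a ∈ C ∧ b ∈ C ∧ Set.Ioo a b ∩ C = ∅

/-- The left endpoint of the bridge of `C` lying immediately to the left of the gap `(a, b)`:
the right endpoint of the nearest gap to the left having diameter at least `b - a`
(or `min C` if there is no such gap). -/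
noncomputable def leftBridgeStart (C : Set ℝ) (a b : ℝ) : ℝ :=
  sSup ({sInf C} ∪ {d | ∃ c, IsGap C c d ∧ d ≤ a ∧ b - a ≤ d - c})

/-- The right endpoint of the bridge of `C` lying immediately to the right of the gap `(a, b)`. -/
noncomputable def rightBridgeEnd (C : Set ℝ) (a b : ℝ) : ℝ :=
  sInf ({sSup C} ∪ {c | ∃ d, IsGap C c d ∧ b ≤ c ∧ b - a ≤ d - c})

/-- The (Newhouse) thickness of a compact set `C ⊆ ℝ`: the infimum over all bounded gaps `G`
of the ratio of the length of the bridge on either side of `G` to the length of `G`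
(`∞` if `C` has no bounded gap). -/
noncomputable def thickness (C : Set ℝ) : ENNReal :=
  ⨅ p : {p : ℝ × ℝ // IsGap C p.1 p.2},
    ENNReal.ofReal
      (min ((p.1.1 - leftBridgeStart C p.1.1 p.1.2) / (p.1.2 - p.1.1))
        ((rightBridgeEnd C p.1.1 p.1.2 - p.1.2) / (p.1.2 - p.1.1)))

/-- `B` is contained in a gap of `A`, i.e. in a connected component of `ℝ \ A`. -/
def ContainedInGap (B A : Set ℝ) : Prop :=
  ∃ x ∈ Aᶜ, B ⊆ connectedComponentIn Aᶜ x

/-- Two sets are interleaved if neither is contained in a gap of the other. -/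
def Interleaved (A B : Set ℝ) : Prop :=
  ¬ContainedInGap B A ∧ ¬ContainedInGap A B

/-- `A` and `B` are `ε`-strongly interleaved: any compact sets within Hausdorff distance `ε`
of `A` and `B` respectively are interleaved. -/
def StronglyInterleaved (ε : ℝ) (A B : Set ℝ) : Prop :=
  ∀ A' B' : Set ℝ, IsCompact A' → IsCompact B' →
    EMetric.hausdorffEdist A A' ≤ ENNReal.ofReal ε →
    EMetric.hausdorffEdist B B' ≤ ENNReal.ofReal ε → Interleaved A' B'

/-- The sequence `0^{k-3}(01^{k-1})^∞` (0-indexed). -/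
noncomputable def seqG (k : ℕ) : ℕ → ℝ := fun j =>
  if j < k - 3 then 0 else if (j - (k - 3)) % k = 0 then 0 else 1

/-- The sequence `1^{k-3}(10^{k-1})^∞` (0-indexed). -/
noncomputable def seqH (k : ℕ) : ℕ → ℝ := fun j =>
  if j < k - 3 then 1 else if (j - (k - 3)) % k = 0 then 1 else 0

/-- The sequence `(1^{k-1}0)^∞` (0-indexed). -/
noncomputable def seqP (k : ℕ) : ℕ → ℝ := fun j => if j % k = k - 1 then 0 else 1



lemma sum_aux (q : ℝ) (hq1 : 1 < q) (c : ℕ → ℝ) (hc : ∀ j, |c j| ≤ 1)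
    (e : ℕ → ℕ) (he : ∀ j, j ≤ e j) : Summable (fun j => c j / q ^ (e j)) := by
  have hq0 : (0:ℝ) < q := by linarith
  have hr0 : (0:ℝ) ≤ 1 / q := by positivity
  have hr1 : 1 / q < 1 := by rw [div_lt_one hq0]; exact hq1
  apply Summable.of_norm_bounded (g := fun j => (1 / q) ^ j)
    (summable_geometric_of_lt_one hr0 hr1)
  intro j
  have hp : (0:ℝ) < q ^ (e j) := pow_pos hq0 _
  rw [Real.norm_eq_abs, abs_div, abs_of_pos hp, one_div, inv_pow, ← one_div]
  exact div_le_div₀ (by norm_num) (hc j) (pow_pos hq0 j) (pow_le_pow_right₀ hq1.le (he j))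



noncomputable def d1W (q y : ℝ) : ℝ :=
  if (1 + q) / 2 ≤ y then 1 else if y ≤ -((1 + q) / 2) then -1 else 0

noncomputable def d2W (q y : ℝ) : ℝ :=
  if (1 + q) / 2 ≤ y then 0 else if y ≤ -((1 + q) / 2) then 0
  else if 1 / 2 ≤ y then 1 else if y ≤ -(1 / 2) then -1 else 0

noncomputable def pickW (q y : ℝ) : ℝ := q * d1W q y + d2W q y

noncomputable def Yw (q x : ℝ) : ℕ → ℝ
  | 0 => q ^ 2 * x
  | n + 1 => q ^ 2 * (Yw q x n - pickW q (Yw q x n))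

noncomputable def cW (q x : ℝ) (k : ℕ) : ℕ → ℝ := fun j =>
  if j < k then 1
  else if j < 2 * k + 4 then 0
  else if (j - (2 * k + 4)) % 2 = 0 then d1W q (Yw q x ((j - (2 * k + 4)) / 2))
  else d2W q (Yw q x ((j - (2 * k + 4)) / 2))

lemma abs_d1W_le (q y : ℝ) : |d1W q y| ≤ 1 := by
  unfold d1W; split_ifs <;> norm_num

lemma abs_d2W_le (q y : ℝ) : |d2W q y| ≤ 1 := by
  unfold d2W; split_ifs <;> norm_num

lemma pickW_dist (q y : ℝ) (hq1 : 1 < q) (hq2 : q < 2) (hy : |y| ≤ q ^ 2 / 2) :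
    |y - pickW q y| ≤ 1 / 2 := by
  rw [abs_le] at hy ⊢
  unfold pickW d1W d2W
  split_ifs with h1 h2 h3 h4 <;> constructor <;> nlinarith [hy.1, hy.2]

lemma Yw_bound (q x : ℝ) (hq1 : 1 < q) (hq2 : q < 2) (hx : |x| ≤ 1 / 2) :
    ∀ n, |Yw q x n| ≤ q ^ 2 / 2 := by
  intro n
  induction n with
  | zero =>
      show |q ^ 2 * x| ≤ q ^ 2 / 2
      rw [abs_mul, abs_of_nonneg (by positivity : (0:ℝ) ≤ q ^ 2)]
      nlinarith [abs_nonneg x]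
  | succ n ih =>
      show |q ^ 2 * (Yw q x n - pickW q (Yw q x n))| ≤ q ^ 2 / 2
      rw [abs_mul, abs_of_nonneg (by positivity : (0:ℝ) ≤ q ^ 2)]
      have := pickW_dist q (Yw q x n) hq1 hq2 ih
      nlinarith

lemma Yw_partial (q x : ℝ) (hq : 0 < q) :
    ∀ N, x - ∑ n ∈ Finset.range N, pickW q (Yw q x n) / q ^ (2 * n + 2)
      = Yw q x N / q ^ (2 * N + 2) := by
  intro N
  induction N with
  | zero =>
      show x - 0 = q ^ 2 * x / q ^ (2 * 0 + 2)
      field_simp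
      ring
  | succ N ih =>
      rw [Finset.sum_range_succ]
      have e : 2 * (N + 1) + 2 = (2 * N + 2) + 2 := by ring
      rw [e]
      show x - (_ + _) = q ^ 2 * (Yw q x N - pickW q (Yw q x N)) / q ^ ((2 * N + 2) + 2)
      have hqp : (0:ℝ) < q ^ (2 * N + 2) := by positivity
      have hr : q ^ 2 * (Yw q x N - pickW q (Yw q x N)) / q ^ (2 * N + 2 + 2)
          = Yw q x N / q ^ (2 * N + 2) - pickW q (Yw q x N) / q ^ (2 * N + 2) := by
        rw [pow_add]
        field_simp
      rw [hr]
      linarith [ih]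

lemma abs_pickW_le (q y : ℝ) (hq0 : 0 ≤ q) : |pickW q y| ≤ q + 1 := by
  unfold pickW
  calc |q * d1W q y + d2W q y| ≤ |q * d1W q y| + |d2W q y| := abs_add_le _ _
    _ ≤ q * 1 + 1 := by
        rw [abs_mul, abs_of_nonneg hq0]
        gcongr
        exacts [abs_d1W_le q y, abs_d2W_le q y]
    _ = q + 1 := by ring

open Filter in
lemma hasSum_pickW (q x : ℝ) (hq1 : 1 < q) (hq2 : q < 2) (hx : |x| ≤ 1 / 2) :
    HasSum (fun n => pickW q (Yw q x n) / q ^ (2 * n + 2)) x := by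
  have hq0 : (0:ℝ) < q := by linarith
  have hr0 : (0:ℝ) ≤ 1 / q := by positivity
  have hr1 : 1 / q < 1 := by rw [div_lt_one hq0]; exact hq1
  have hbound : ∀ n : ℕ, ‖pickW q (Yw q x n) / q ^ (2 * n + 2)‖ ≤ 3 * (1 / q) ^ n := by
    intro n
    have h1 : |pickW q (Yw q x n)| ≤ 3 := le_trans (abs_pickW_le q _ hq0.le) (by linarith)
    have h2 : q ^ n ≤ q ^ (2 * n + 2) := pow_le_pow_right₀ hq1.le (by omega)
    have h3 : (0:ℝ) < q ^ n := by positivity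
    have h4 : (0:ℝ) < q ^ (2 * n + 2) := by positivity
    rw [Real.norm_eq_abs, abs_div, abs_of_nonneg h4.le, one_div, inv_pow, ← one_div,
      mul_one_div, div_le_div_iff₀ h4 h3]
    calc |pickW q (Yw q x n)| * q ^ n ≤ 3 * q ^ (2 * n + 2) := by
          apply mul_le_mul h1 h2 h3.le (by norm_num)
      _ = 3 * q ^ (2 * n + 2) := rfl
    -- done
  have hsummable : Summable (fun n => pickW q (Yw q x n) / q ^ (2 * n + 2)) :=
    Summable.of_norm_bounded ((summable_geometric_of_lt_one hr0 hr1).mul_left 3) hbound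
  rw [hsummable.hasSum_iff_tendsto_nat]
  have heq : (fun N => ∑ i ∈ Finset.range N, pickW q (Yw q x i) / q ^ (2 * i + 2))
      = fun N => x - Yw q x N / q ^ (2 * N + 2) := by
    funext N
    have := Yw_partial q x hq0 N
    linarith
  rw [heq]
  have hzero : Tendsto (fun N => Yw q x N / q ^ (2 * N + 2)) atTop (nhds 0) := by
    apply squeeze_zero_norm (a := fun N => 2 * (1 / q) ^ N)
    · intro N
      have hb := Yw_bound q x hq1 hq2 hx N
      have h2 : q ^ N ≤ q ^ (2 * N + 2) := pow_le_pow_right₀ hq1.le (by omega)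
      have h4 : (0:ℝ) < q ^ (2 * N + 2) := by positivity
      rw [Real.norm_eq_abs, abs_div, abs_of_nonneg h4.le, one_div, inv_pow, ← one_div,
        mul_one_div, div_le_div_iff₀ h4 (by positivity)]
      have h5 : |Yw q x N| ≤ 2 := by nlinarith
      calc |Yw q x N| * q ^ N ≤ 2 * q ^ N :=
            mul_le_mul_of_nonneg_right h5 (pow_pos hq0 N).le
        _ ≤ 2 * q ^ (2 * N + 2) := by linarith
    · simpa using (tendsto_pow_atTop_nhds_zero_of_lt_one hr0 hr1).const_mul 2
  simpa using tendsto_const_nhds.sub hzero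

lemma cW_abs_le (q x : ℝ) (k : ℕ) (j : ℕ) : |cW q x k j| ≤ 1 := by
  unfold cW
  split_ifs
  · norm_num
  · norm_num
  · exact abs_d1W_le _ _
  · exact abs_d2W_le _ _

lemma cW_block1 (q x : ℝ) (k n : ℕ) : cW q x k (2 * k + 4 + 2 * n) = d1W q (Yw q x n) := by
  unfold cW
  have h1 : ¬(2 * k + 4 + 2 * n < k) := by omega
  have h2 : ¬(2 * k + 4 + 2 * n < 2 * k + 4) := by omega
  have h3 : 2 * k + 4 + 2 * n - (2 * k + 4) = 2 * n := by omega
  have h4 : (2 * n) % 2 = 0 := by omega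
  have h5 : 2 * n / 2 = n := by omega
  rw [if_neg h1, if_neg h2, h3, if_pos h4, h5]

lemma cW_block2 (q x : ℝ) (k n : ℕ) : cW q x k (2 * k + 4 + 2 * n + 1) = d2W q (Yw q x n) := by
  unfold cW
  have h1 : ¬(2 * k + 4 + 2 * n + 1 < k) := by omega
  have h2 : ¬(2 * k + 4 + 2 * n + 1 < 2 * k + 4) := by omega
  have h3 : 2 * k + 4 + 2 * n + 1 - (2 * k + 4) = 2 * n + 1 := by omega
  have h4 : ¬((2 * n + 1) % 2 = 0) := by omega
  have h5 : (2 * n + 1) / 2 = n := by omega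
  rw [if_neg h1, if_neg h2, h3, if_neg h4, h5]

lemma sq_le_geom179 : ∀ m : ℕ, 9 ≤ m → ((m : ℝ)) ^ 2 ≤ (17 / 9) ^ m := by
  intro m hm
  induction m with
  | zero => omega
  | succ n ih =>
      rcases Nat.lt_or_ge n 9 with h | h
      · interval_cases n <;> first | omega | norm_num
      · have h1 := ih (by omega)
        have h2 : ((n:ℝ) + 1) ^ 2 ≤ (17 / 9) * (n:ℝ) ^ 2 := by
          have : (9:ℝ) ≤ (n:ℝ) := by exact_mod_cast h
          nlinarith
        calc ((n + 1 : ℕ) : ℝ) ^ 2 = ((n:ℝ) + 1) ^ 2 := by push_cast; ring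
          _ ≤ (17 / 9) * (n:ℝ) ^ 2 := h2
          _ ≤ (17 / 9) * (17 / 9) ^ n := by nlinarith
          _ = (17 / 9) ^ (n + 1) := by rw [pow_succ]; ring

lemma two_mul_abs_pow_sub (a b : ℝ) (ha : |a| ≤ 2) (hb : |b| ≤ 2) :
    ∀ m : ℕ, 2 * |a ^ m - b ^ m| ≤ (m : ℝ) * 2 ^ m * |a - b| := by
  intro m
  induction m with
  | zero => simp
  | succ n ih =>
      have key : a ^ (n + 1) - b ^ (n + 1) = a * (a ^ n - b ^ n) + b ^ n * (a - b) := by ring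
      have h1 : |a ^ (n + 1) - b ^ (n + 1)| ≤ |a| * |a ^ n - b ^ n| + |b| ^ n * |a - b| := by
        rw [key]
        calc |a * (a ^ n - b ^ n) + b ^ n * (a - b)|
            ≤ |a * (a ^ n - b ^ n)| + |b ^ n * (a - b)| := abs_add_le _ _
          _ = |a| * |a ^ n - b ^ n| + |b| ^ n * |a - b| := by rw [abs_mul, abs_mul, abs_pow]
      have h2 : |b| ^ n ≤ 2 ^ n := pow_le_pow_left₀ (abs_nonneg b) hb n
      have h3 : |a| * |a ^ n - b ^ n| ≤ 2 * |a ^ n - b ^ n| :=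
        mul_le_mul_of_nonneg_right ha (abs_nonneg _)
      have h5 : |b| ^ n * |a - b| ≤ 2 ^ n * |a - b| :=
        mul_le_mul_of_nonneg_right h2 (abs_nonneg _)
      have : 2 * |a ^ (n + 1) - b ^ (n + 1)| ≤ 2 * (2 * |a ^ n - b ^ n|) + 2 * (2 ^ n * |a - b|) := by
        linarith
      calc 2 * |a ^ (n + 1) - b ^ (n + 1)|
          ≤ 2 * (2 * |a ^ n - b ^ n|) + 2 * (2 ^ n * |a - b|) := this
        _ ≤ 2 * ((n : ℝ) * 2 ^ n * |a - b|) + 2 * (2 ^ n * |a - b|) := by nlinarith [abs_nonneg (a-b)]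
        _ = ((n + 1 : ℕ) : ℝ) * 2 ^ (n + 1) * |a - b| := by push_cast; ring

lemma ratio_bound (P Q E : ℝ) (hP : 0 ≤ P) (h3 : 1 - E ≤ Q) (h4 : P * Q ≤ 1)
    (hE : E ≤ 1 / 25) : P ≤ 25 / 24 := by
  nlinarith [mul_le_mul_of_nonneg_left h3 hP]

set_option maxHeartbeats 1000000 in
lemma key_bound (k : ℕ) (hk : 9 ≤ k) (qk : ℝ) (hqk1 : 1 < qk) (hqk2 : qk < 2)
    (hgeom : qk ^ k = ∑ i ∈ Finset.range k, qk ^ i)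
    (q : ℝ) (hq1 : 1 < q) (hq2 : q < 2)
    (hclose : |q - qk| ≤ qk ^ (-(2 * (k : ℤ)) - 6)) :
    |q ^ (2 * k + 4) * (1 - ∑ j ∈ Finset.range k, 1 / q ^ (j + 1))| ≤ 1 / 2 := by
  have hqk0 : (0:ℝ) < qk := by linarith
  have hq0 : (0:ℝ) < q := by linarith
  have hkR : (9:ℝ) ≤ (k:ℝ) := by exact_mod_cast hk
  have hkk : (k:ℝ) ≤ qk ^ k := by
    rw [hgeom]
    calc (k:ℝ) = ∑ _i ∈ Finset.range k, (1:ℝ) := by simp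
      _ ≤ ∑ i ∈ Finset.range k, qk ^ i :=
          Finset.sum_le_sum fun i _ => one_le_pow₀ hqk1.le
  have hqq : qk ^ k * (2 - qk) = 1 := by
    have h := geom_sum_mul qk k
    rw [← hgeom] at h
    nlinarith [h]
  have hpk : (0:ℝ) < qk ^ k := pow_pos hqk0 k
  have h2q : 2 - qk = 1 / qk ^ k := by
    field_simp
    linarith [hqq]
  have h9 : (9:ℝ) ≤ qk ^ k := le_trans hkR hkk
  have h179 : (17:ℝ) / 9 ≤ qk := by
    have h1 : 1 / qk ^ k ≤ 1 / 9 := one_div_le_one_div_of_le (by norm_num) h9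
    linarith [h2q]
  have h306 : (306:ℝ) ≤ qk ^ k := by
    calc (306:ℝ) ≤ (17 / 9) ^ 9 := by norm_num
      _ ≤ qk ^ 9 := pow_le_pow_left₀ (by norm_num) h179 9
      _ ≤ qk ^ k := pow_le_pow_right₀ (by linarith) hk
  have hqk_lb : (1.996:ℝ) ≤ qk := by
    have h1 : 1 / qk ^ k ≤ 1 / 306 := one_div_le_one_div_of_le (by norm_num) h306
    linarith [h2q]
  -- rewrite the zpow
  have hzp : qk ^ (-(2 * (k : ℤ)) - 6) = 1 / qk ^ (2 * k + 6) := by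
    have he : (-(2 * (k : ℤ)) - 6) = -((2 * k + 6 : ℕ) : ℤ) := by push_cast; ring
    rw [he, zpow_neg, zpow_natCast, one_div]
  rw [hzp] at hclose
  have hpow6 : (0:ℝ) < qk ^ (2 * k + 6) := pow_pos hqk0 _
  have hpow93636 : (93636:ℝ) ≤ qk ^ (2 * k + 6) := by
    calc (93636:ℝ) = 306 * 306 := by norm_num
      _ ≤ qk ^ k * qk ^ k := by nlinarith
      _ = qk ^ (k + k) := (pow_add qk k k).symm
      _ ≤ qk ^ (2 * k + 6) := pow_le_pow_right₀ (by linarith) (by omega)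
  have hδsmall : 1 / qk ^ (2 * k + 6) ≤ 1 / 1000 :=
    one_div_le_one_div_of_le (by norm_num) (by linarith)
  have hq_lb : (1.995:ℝ) ≤ q := by
    have h1 := (abs_le.mp hclose).1
    linarith
  -- S(qk) = 1
  have hSqk : ∑ j ∈ Finset.range k, 1 / qk ^ (j + 1) = 1 := by
    have hterm : ∀ j ∈ Finset.range k,
        1 / qk ^ (j + 1) = qk ^ (k - 1 - j) * (1 / qk ^ k) := by
      intro j hj
      rw [Finset.mem_range] at hj
      have he : (k - 1 - j) + (j + 1) = k := by omega
      rw [mul_one_div, div_eq_div_iff (pow_pos hqk0 (j+1)).ne' hpk.ne', one_mul, ← pow_add, he]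
    rw [Finset.sum_congr rfl hterm, ← Finset.sum_mul,
      Finset.sum_range_reflect (fun i => qk ^ i) k, ← hgeom]
    field_simp
  have hX : 1 - ∑ j ∈ Finset.range k, 1 / q ^ (j + 1)
      = ∑ j ∈ Finset.range k, (1 / qk ^ (j + 1) - 1 / q ^ (j + 1)) := by
    rw [Finset.sum_sub_distrib, hSqk]
  -- t bounds
  have hqmul : (3.98:ℝ) ≤ q * qk := by nlinarith
  have hqmul0 : (0:ℝ) < q * qk := by linarith
  have ht_pos : (0:ℝ) < 2 / (q * qk) := by positivity
  have ht51 : 2 / (q * qk) ≤ 0.51 := by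
    rw [div_le_iff₀ hqmul0]; nlinarith
  set t : ℝ := 2 / (q * qk) with ht_def
  -- termwise bound
  have hterm2 : ∀ j ∈ Finset.range k,
      |1 / qk ^ (j + 1) - 1 / q ^ (j + 1)|
        ≤ 1 / qk ^ (2 * k + 6) / 2 * (((j:ℝ) + 1) * t ^ (j + 1)) := by
    intro j _
    set m := j + 1 with hm
    have hqm : (0:ℝ) < q ^ m := pow_pos hq0 m
    have hqkm : (0:ℝ) < qk ^ m := pow_pos hqk0 m
    have habs : 1 / qk ^ m - 1 / q ^ m = (q ^ m - qk ^ m) / (qk ^ m * q ^ m) := by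
      field_simp
    have h2m := two_mul_abs_pow_sub q qk
      (by rw [abs_of_pos hq0]; linarith) (by rw [abs_of_pos hqk0]; linarith) m
    have htm : t ^ m = 2 ^ m / (q ^ m * qk ^ m) := by
      rw [ht_def, div_pow, mul_pow]
    rw [habs, abs_div, abs_of_pos (mul_pos hqkm hqm), htm,
      div_le_iff₀ (mul_pos hqkm hqm)]
    have heq : 1 / qk ^ (2 * k + 6) / 2 * (((j:ℝ) + 1) * (2 ^ m / (q ^ m * qk ^ m)))
        * (qk ^ m * q ^ m) = ((j:ℝ) + 1) * 2 ^ m * (1 / qk ^ (2 * k + 6)) / 2 := by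
      field_simp
    rw [heq]
    have hmc : ((m:ℕ):ℝ) = (j:ℝ) + 1 := by rw [hm]; push_cast; ring
    have hmul := mul_le_mul_of_nonneg_left hclose
      (by positivity : (0:ℝ) ≤ ((j:ℝ) + 1) * 2 ^ m)
    rw [hmc] at h2m
    linarith [h2m, hmul]
  -- sum of the geometric-derivative series
  have htnorm : ‖t‖ < 1 := by
    rw [Real.norm_eq_abs, abs_of_pos ht_pos]; linarith
  have hsum_t : ∑ j ∈ Finset.range k, ((j:ℝ) + 1) * t ^ (j + 1) ≤ 2.2 := by
    have h1 : ∑ m ∈ Finset.range (k + 1), (m:ℝ) * t ^ m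
        = ∑ j ∈ Finset.range k, ((j:ℝ) + 1) * t ^ (j + 1) := by
      rw [Finset.sum_range_succ' (fun m => (m:ℝ) * t ^ m) k]
      push_cast
      simp
    have hsummable : Summable (fun m : ℕ => (m:ℝ) * t ^ m) := by
      have h := summable_pow_mul_geometric_of_norm_lt_one (R := ℝ) 1 htnorm
      simpa using h
    have h2 : ∑ m ∈ Finset.range (k + 1), (m:ℝ) * t ^ m ≤ ∑' m : ℕ, (m:ℝ) * t ^ m :=
      Summable.sum_le_tsum _ (fun i _ => by positivity) hsummable
    have h3 : ∑' m : ℕ, (m:ℝ) * t ^ m = t / (1 - t) ^ 2 :=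
      tsum_coe_mul_geometric_of_norm_lt_one htnorm
    have hq1t : (0:ℝ) < 1 - t := by linarith
    have h4 : t / (1 - t) ^ 2 ≤ 2.2 := by
      rw [div_le_iff₀ (pow_pos hq1t 2)]
      nlinarith [mul_nonneg (by linarith : (0:ℝ) ≤ 0.51 - t) (by linarith : (0:ℝ) ≤ 1.939 - t)]
    rw [← h1]
    rw [h3] at h2
    linarith [h2, h4]
  -- the (q/qk)^n factor
  have hpow7 : (0:ℝ) < qk ^ (2 * k + 7) := pow_pos hqk0 _
  set ε : ℝ := 1 / qk ^ (2 * k + 7) with hε_def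
  have hε_pos : 0 < ε := by positivity
  have hδε : 1 / qk ^ (2 * k + 6) = qk * ε := by
    rw [hε_def]
    have : qk ^ (2 * k + 7) = qk ^ (2 * k + 6) * qk := by
      rw [← pow_succ]
    rw [this]
    field_simp
  have hnε : ((2 * k + 4 : ℕ):ℝ) * ε ≤ 1 / 25 := by
    have hL := sq_le_geom179 (2 * k + 7) (by omega)
    have hL2 : ((2 * k + 7 : ℕ):ℝ) ^ 2 ≤ qk ^ (2 * k + 7) :=
      le_trans hL (pow_le_pow_left₀ (by norm_num) h179 _)
    have hlin : 25 * ((2 * k + 4 : ℕ):ℝ) ≤ ((2 * k + 7 : ℕ):ℝ) ^ 2 := by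
      push_cast
      nlinarith
    rw [hε_def, mul_one_div, div_le_div_iff₀ hpow7 (by norm_num : (0:ℝ) < 25)]
    nlinarith
  have hε1 : ε ≤ 1 := by
    rw [hε_def]
    rw [div_le_one hpow7]
    calc (1:ℝ) ≤ 93636 := by norm_num
      _ ≤ qk ^ (2 * k + 6) := hpow93636
      _ ≤ qk ^ (2 * k + 7) := pow_le_pow_right₀ (by linarith) (by omega)
  have hq_ub : q ≤ qk * (1 + ε) := by
    have h1 := (abs_le.mp hclose).2
    have : qk * (1 + ε) = qk + qk * ε := by ring
    rw [this, ← hδε]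
    linarith
  have hρ : q ^ (2 * k + 4) ≤ 25 / 24 * qk ^ (2 * k + 4) := by
    have h1 : q ^ (2 * k + 4) ≤ (qk * (1 + ε)) ^ (2 * k + 4) :=
      pow_le_pow_left₀ hq0.le hq_ub _
    have h2 : (qk * (1 + ε)) ^ (2 * k + 4) = qk ^ (2 * k + 4) * (1 + ε) ^ (2 * k + 4) :=
      mul_pow _ _ _
    have h3 : 1 - ((2 * k + 4 : ℕ):ℝ) * ε ≤ (1 - ε) ^ (2 * k + 4) := by
      have h := one_add_mul_le_pow (a := -ε) (by linarith) (2 * k + 4)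
      rw [← sub_eq_add_neg] at h
      rw [show (1:ℝ) + ((2*k+4:ℕ):ℝ) * -ε = 1 - ((2*k+4:ℕ):ℝ) * ε from by push_cast; ring] at h
      exact_mod_cast h
    have h4 : (1 + ε) ^ (2 * k + 4) * (1 - ε) ^ (2 * k + 4) ≤ 1 := by
      rw [← mul_pow]
      apply pow_le_one₀ (by nlinarith [sq_nonneg ε]) (by nlinarith [sq_nonneg ε])
    have hpn : (0:ℝ) ≤ (1 + ε) ^ (2 * k + 4) := by positivity
    have h5 : (1 + ε) ^ (2 * k + 4) ≤ 25 / 24 :=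
      ratio_bound _ _ _ hpn h3 h4 hnε
    calc q ^ (2 * k + 4) ≤ qk ^ (2 * k + 4) * (1 + ε) ^ (2 * k + 4) := by rw [← h2]; exact h1
      _ ≤ qk ^ (2 * k + 4) * (25 / 24) :=
          mul_le_mul_of_nonneg_left h5 (pow_pos hqk0 _).le
      _ = 25 / 24 * qk ^ (2 * k + 4) := by ring
  -- combine everything
  have hp4 : (0:ℝ) < qk ^ (2 * k + 4) := pow_pos hqk0 _
  have hqp4 : (0:ℝ) < q ^ (2 * k + 4) := pow_pos hq0 _
  have hXbound : |1 - ∑ j ∈ Finset.range k, 1 / q ^ (j + 1)|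
      ≤ 1 / qk ^ (2 * k + 6) / 2 * 2.2 := by
    rw [hX]
    calc |∑ j ∈ Finset.range k, (1 / qk ^ (j + 1) - 1 / q ^ (j + 1))|
        ≤ ∑ j ∈ Finset.range k, |1 / qk ^ (j + 1) - 1 / q ^ (j + 1)| :=
          Finset.abs_sum_le_sum_abs _ _
      _ ≤ ∑ j ∈ Finset.range k, 1 / qk ^ (2 * k + 6) / 2 * (((j:ℝ) + 1) * t ^ (j + 1)) :=
          Finset.sum_le_sum hterm2
      _ = 1 / qk ^ (2 * k + 6) / 2 * ∑ j ∈ Finset.range k, ((j:ℝ) + 1) * t ^ (j + 1) := by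
          rw [Finset.mul_sum]
      _ ≤ 1 / qk ^ (2 * k + 6) / 2 * 2.2 := by
          apply mul_le_mul_of_nonneg_left hsum_t (by positivity)
  calc |q ^ (2 * k + 4) * (1 - ∑ j ∈ Finset.range k, 1 / q ^ (j + 1))|
      = q ^ (2 * k + 4) * |1 - ∑ j ∈ Finset.range k, 1 / q ^ (j + 1)| := by
        rw [abs_mul, abs_of_pos hqp4]
    _ ≤ q ^ (2 * k + 4) * (1 / qk ^ (2 * k + 6) / 2 * 2.2) :=
        mul_le_mul_of_nonneg_left hXbound hqp4.le
    _ ≤ (25 / 24 * qk ^ (2 * k + 4)) * (1 / qk ^ (2 * k + 6) / 2 * 2.2) :=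
        mul_le_mul_of_nonneg_right hρ (by positivity)
    _ ≤ 1 / 2 := by
        have hqq2 : qk ^ (2 * k + 6) = qk ^ (2 * k + 4) * qk ^ 2 := by
          rw [← pow_add]
        have hkey : (25 / 24 * qk ^ (2 * k + 4)) * (1 / qk ^ (2 * k + 6) / 2 * 2.2)
            = (55 / 48) / qk ^ 2 := by
          rw [hqq2]
          field_simp
          ring
        rw [hkey, div_le_iff₀ (by positivity)]
        nlinarith


theorem expansion_of_one_with_W2_tail
    (k : ℕ) (hk : 9 ≤ k) (qk : ℝ) (hqk : IsBonacci k qk)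
    (q : ℝ) (hq : q ∈ Set.Ioo (1 : ℝ) 2)
    (hclose : |q - qk| ≤ qk ^ (-(2 * (k : ℤ)) - 6)) :
    ∃ c : ℕ → ℝ, IsExtDigitSeq c ∧ piQ q c = 1 ∧
      (∀ j < k, c j = 1) ∧ (∀ j, k ≤ j → j < 2 * k + 4 → c j = 0) ∧
      ∀ n : ℕ, (c (2 * k + 4 + 2 * n), c (2 * k + 4 + 2 * n + 1)) ∈
        ({(-1, 0), (0, -1), (0, 0), (0, 1), (1, 0)} : Set (ℝ × ℝ)) := by
  obtain ⟨hq1, hq2⟩ := hq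
  obtain ⟨⟨hqk1, hqk2⟩, hgeom⟩ := hqk
  have hq0 : (0:ℝ) < q := by linarith
  set S : ℝ := ∑ j ∈ Finset.range k, 1 / q ^ (j + 1) with hS_def
  set x : ℝ := q ^ (2 * k + 4) * (1 - S) with hx_def
  have hx : |x| ≤ 1 / 2 := key_bound k hk qk hqk1 hqk2 hgeom q hq1 hq2 hclose
  refine ⟨cW q x k, ?_, ?_, ?_, ?_, ?_⟩
  · intro j
    unfold cW d1W d2W
    split_ifs <;> norm_num
  · -- piQ q c = 1
    have hsum_c : Summable (fun j => cW q x k j / q ^ (j + 1)) :=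
      sum_aux q hq1 _ (cW_abs_le q x k) _ (fun j => by omega)
    have hps := hasSum_pickW q x hq1 hq2 hx
    have hhead : ∑ j ∈ Finset.range (2 * k + 4), cW q x k j / q ^ (j + 1) = S := by
      rw [hS_def]
      have h0 : ∀ i ∈ Finset.range (2 * k + 4), i ∉ Finset.range k →
          cW q x k i / q ^ (i + 1) = 0 := by
        intro i hi hni
        rw [Finset.mem_range] at hi
        have hik : ¬ i < k := by simpa using hni
        unfold cW
        rw [if_neg hik, if_pos hi]
        simp
      rw [← Finset.sum_subset (Finset.range_subset_range.mpr (by omega : k ≤ 2 * k + 4)) h0]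
      exact Finset.sum_congr rfl fun j hj => by
        unfold cW; rw [if_pos (Finset.mem_range.mp hj)]
  -- tail analysis
    have hA : Summable (fun n => d1W q (Yw q x n) / q ^ (2 * n + 1)) :=
      sum_aux q hq1 _ (fun n => abs_d1W_le q _) _ (fun n => by omega)
    have hB : Summable (fun n => d2W q (Yw q x n) / q ^ (2 * n + 2)) :=
      sum_aux q hq1 _ (fun n => abs_d2W_le q _) _ (fun n => by omega)
    have he : ∀ n : ℕ, cW q x k (2 * n + (2 * k + 4)) / q ^ (2 * n + 1)
        = d1W q (Yw q x n) / q ^ (2 * n + 1) := by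
      intro n
      rw [show 2 * n + (2 * k + 4) = 2 * k + 4 + 2 * n from by ring, cW_block1]
    have ho : ∀ n : ℕ, cW q x k (2 * n + 1 + (2 * k + 4)) / q ^ (2 * n + 1 + 1)
        = d2W q (Yw q x n) / q ^ (2 * n + 2) := by
      intro n
      rw [show 2 * n + 1 + (2 * k + 4) = 2 * k + 4 + 2 * n + 1 from by ring, cW_block2]
    have hT : ∑' i : ℕ, cW q x k (i + (2 * k + 4)) / q ^ (i + 1) = x := by
      have hsplit2 := tsum_even_add_odd
        (f := fun i => cW q x k (i + (2 * k + 4)) / q ^ (i + 1))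
        (hA.congr fun n => (he n).symm) (hB.congr fun n => (ho n).symm)
      rw [← hsplit2, tsum_congr he, tsum_congr ho, ← Summable.tsum_add hA hB]
      have hcomb : ∀ n : ℕ, d1W q (Yw q x n) / q ^ (2 * n + 1)
          + d2W q (Yw q x n) / q ^ (2 * n + 2) = pickW q (Yw q x n) / q ^ (2 * n + 2) := by
        intro n
        unfold pickW
        rw [show 2 * n + 2 = (2 * n + 1) + 1 from rfl, pow_succ]
        have h1 : (0:ℝ) < q ^ (2 * n + 1) := pow_pos hq0 _
        field_simp
        ring
      rw [tsum_congr hcomb]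
      exact hps.tsum_eq
    have htail_eq : ∀ i : ℕ, cW q x k (i + (2 * k + 4)) / q ^ ((i + (2 * k + 4)) + 1)
        = (cW q x k (i + (2 * k + 4)) / q ^ (i + 1)) * (1 / q ^ (2 * k + 4)) := by
      intro i
      rw [show (i + (2 * k + 4)) + 1 = (i + 1) + (2 * k + 4) from by ring, pow_add,
        mul_one_div, div_div]
    show piQ q (cW q x k) = 1
    unfold piQ
    rw [← Summable.sum_add_tsum_nat_add (2 * k + 4) hsum_c, hhead]
    rw [tsum_congr htail_eq, tsum_mul_right, hT, hx_def]
    have hp : (q:ℝ) ^ (2 * k + 4) ≠ 0 := by positivity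
    field_simp
    ring
  · intro j hj
    unfold cW
    rw [if_pos hj]
  · intro j h1 h2
    unfold cW
    rw [if_neg (by omega), if_pos h2]
  · intro n
    rw [cW_block1, cW_block2]
    unfold d1W d2W
    split_ifs <;>
      norm_num [Set.mem_insert_iff, Set.mem_singleton_iff, Prod.ext_iff]
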